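/- For all n ≥ 0, (−1)^{n+1} Q_{n+1}(−1) = 1 + 2 ∑_{j=0}^n (1/(p_j π_j)) ∑_{k=0}^j r_k π_k (−1)^k Q_k(−1). -/

import Mathlib

open Finset Filter

theorem stmt5 (p q r : ℕ → ℝ) (Q : ℕ → ℝ → ℝ)
    (hp : ∀ j, 0 < p j) (hq : ∀ j, 0 < q (j + 1)) (hr : ∀ j, 0 ≤ r j)
    (hq0 : q 0 = 0) (hs : ∀ j, p j + q j + r j = 1)
    (hQ0 : ∀ x : ℝ, Q 0 x = 1) (hQ1 : ∀ x : ℝ, p 0 * Q 1 x = x - r 0)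
    (hQrec : ∀ n : ℕ, ∀ x : ℝ, x * Q (n + 1) x =
      q (n + 1) * Q n x + r (n + 1) * Q (n + 1) x + p (n + 1) * Q (n + 2) x)
    (π : ℕ → ℝ) (hπ0 : π 0 = 1) (hπ : ∀ n, π (n + 1) = π n * (p n / q (n + 1))) :
    ∀ n : ℕ,
      (-1 : ℝ) ^ (n + 1) * Q (n + 1) (-1) =
        1 + 2 * ∑ j ∈ Finset.range (n + 1), (1 / (p j * π j)) *
          ∑ k ∈ Finset.range (j + 1), r k * π k * ((-1 : ℝ) ^ k * Q k (-1)) := by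
  have hπpos : ∀ n, 0 < π n := by
    intro n
    induction n with
    | zero => rw [hπ0]; norm_num
    | succ k ih => rw [hπ]; exact mul_pos ih (div_pos (hp k) (hq k))
  have key : ∀ n, p n * π n * ((-1 : ℝ) ^ (n + 1) * Q (n + 1) (-1)
      - (-1 : ℝ) ^ n * Q n (-1)) =
      2 * ∑ k ∈ Finset.range (n + 1), r k * π k * ((-1 : ℝ) ^ k * Q k (-1)) := by
    intro n
    induction n with
    | zero =>
      norm_num [Finset.sum_range_one, hπ0, hQ0]
      linear_combination (-1 : ℝ) * hQ1 (-1) - hs 0 + hq0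
    | succ m ih =>
      have hqne : q (m + 1) ≠ 0 := (hq m).ne'
      have hG : q (m + 1) * π (m + 1) = p m * π m := by
        rw [hπ]; field_simp
      have hE := hQrec m (-1)
      rw [Finset.sum_range_succ]
      linear_combination (-(-1 : ℝ) ^ m * π (m + 1)) * hE
        + (-(-1 : ℝ) ^ m * (Q m (-1) + Q (m + 1) (-1))) * hG + ih
        + ((-1 : ℝ) ^ m * π (m + 1) * Q (m + 1) (-1)) * hs (m + 1)
  have h2 : ∀ n, 2 * ((1 / (p n * π n)) *
      ∑ k ∈ Finset.range (n + 1), r k * π k * ((-1 : ℝ) ^ k * Q k (-1))) =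
      (-1 : ℝ) ^ (n + 1) * Q (n + 1) (-1) - (-1 : ℝ) ^ n * Q n (-1) := by
    intro n
    have hne : p n * π n ≠ 0 := ne_of_gt (mul_pos (hp n) (hπpos n))
    rw [show (2 : ℝ) * ((1 / (p n * π n)) *
        ∑ k ∈ Finset.range (n + 1), r k * π k * ((-1 : ℝ) ^ k * Q k (-1))) =
        (1 / (p n * π n)) * (2 * ∑ k ∈ Finset.range (n + 1),
          r k * π k * ((-1 : ℝ) ^ k * Q k (-1))) from by ring, ← key n]
    field_simp
    exact mul_div_cancel_left₀ _ hne
  intro n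
  induction n with
  | zero =>
    have h0 := h2 0
    rw [Finset.sum_range_one]
    simp only [hQ0, pow_zero, one_mul] at h0 ⊢
    linarith
  | succ n ih =>
    have h1 := h2 (n + 1)
    rw [Finset.sum_range_succ]
    linarith
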